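/- Let k and ℓ be natural numbers with ℓ ≥ 1, and let H ⊆ [k] × [k], viewed as the edge set of a bipartite graph with both sides indexed by [k]. Then H contains no (ℓ+1)-pseudo-cube (as a subset of [k]^2) if and only if every nonempty subset H' ⊆ H contains a vertex of degree at most ℓ, i.e., there exists (a,b) ∈ H' such that |{b' ∈ [k] : (a,b') ∈ H'}| ≤ ℓ or |{a' ∈ [k] : (a',b) ∈ H'}| ≤ ℓ. -/

import Mathlib

/-- `B` is an `ℓ`-pseudo-cube: `B` is nonempty and for every `v ∈ B` and every coordinate
`i`, there exist at least `ℓ - 1` distinct vectors `u ∈ B` with `u ≠ v` that agree with `v`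
on all coordinates except (possibly) `i`. -/
def IsPseudoCube {ι α : Type*} (ℓ : ℕ) (B : Set (ι → α)) : Prop :=
  B.Nonempty ∧ ∀ v ∈ B, ∀ i : ι, ∃ U : Finset (ι → α), U.card = ℓ - 1 ∧
    ∀ u ∈ U, u ∈ B ∧ u ≠ v ∧ ∀ j, j ≠ i → u j = v j

/-- For `H ⊆ [k]^2` viewed as the edge set of a bipartite graph with both sides indexed
by `[k]` (an element `v ∈ H` being the edge `(v 0, v 1)`): `H` contains no
`(ℓ+1)`-pseudo-cube iff every nonempty subset `H' ⊆ H` contains an edge one of whose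
endpoints has degree at most `ℓ` in `H'`. -/
theorem no_pseudocube_iff_degenerate (k ℓ : ℕ) (hℓ : 1 ≤ ℓ) (H : Finset (Fin 2 → Fin k)) :
    (∀ B : Set (Fin 2 → Fin k), B ⊆ (H : Set (Fin 2 → Fin k)) → ¬ IsPseudoCube (ℓ + 1) B) ↔
    (∀ H' : Finset (Fin 2 → Fin k), H' ⊆ H → H'.Nonempty →
      ∃ v ∈ H', (H'.filter fun u => u 0 = v 0).card ≤ ℓ ∨
        (H'.filter fun u => u 1 = v 1).card ≤ ℓ) := by
  constructor
  · intro h H' hsub hne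
    by_contra hc
    push_neg at hc
    refine h (↑H' : Set (Fin 2 → Fin k)) (by exact_mod_cast hsub) ?_
    refine ⟨by exact_mod_cast hne, ?_⟩
    intro v hv i
    have hvH' : v ∈ H' := by exact_mod_cast hv
    obtain ⟨h0, h1⟩ := hc v hvH'
    -- pick the filter corresponding to coordinate i
    have key : ∀ (c : Fin 2), ℓ < (H'.filter fun u => u c = v c).card →
        (∀ j : Fin 2, j ≠ i → j = c) →
        ∃ U : Finset (Fin 2 → Fin k), U.card = ℓ + 1 - 1 ∧
          ∀ u ∈ U, u ∈ (↑H' : Set (Fin 2 → Fin k)) ∧ u ≠ v ∧ ∀ j, j ≠ i → u j = v j := by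
      intro c hcard hj
      set S := ((H'.filter fun u => u c = v c).erase v) with hS
      have hvfil : v ∈ H'.filter fun u => u c = v c := by
        simp [hvH']
      have hScard : ℓ ≤ S.card := by
        rw [hS, Finset.card_erase_of_mem hvfil]
        exact Nat.le_pred_of_lt hcard
      obtain ⟨U, hUS, hUcard⟩ := Finset.exists_subset_card_eq hScard
      refine ⟨U, by simp [hUcard], ?_⟩
      intro u hu
      have huS := hUS hu
      rw [hS, Finset.mem_erase, Finset.mem_filter] at huS
      refine ⟨by exact_mod_cast huS.2.1, huS.1, ?_⟩
      intro j hji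
      rw [hj j hji]
      exact huS.2.2
    fin_cases i
    · exact key 1 h1 (by decide)
    · exact key 0 h0 (by decide)
  · intro h B hB hcube
    obtain ⟨hne, hprop⟩ := hcube
    have hBfin : B.Finite := Set.Finite.subset H.finite_toSet hB
    set H' := hBfin.toFinset with hH'
    have hmem : ∀ x, x ∈ H' ↔ x ∈ B := by simp [hH']
    have hsub : H' ⊆ H := by
      intro x hx
      exact_mod_cast hB ((hmem x).mp hx)
    have hne' : H'.Nonempty := by
      obtain ⟨x, hx⟩ := hne
      exact ⟨x, (hmem x).mpr hx⟩
    obtain ⟨v, hv, hcase⟩ := h H' hsub hne'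
    have hvB : v ∈ B := (hmem v).mp hv
    have key : ∀ (c i : Fin 2), c ≠ i →
        (H'.filter fun u => u c = v c).card ≤ ℓ → False := by
      intro c i hci hcard
      obtain ⟨U, hUcard, hU⟩ := hprop v hvB i
      have hUsub : insert v U ⊆ H'.filter fun u => u c = v c := by
        intro u hu
        rcases Finset.mem_insert.mp hu with rfl | hu
        · simp [hv]
        · obtain ⟨huB, hune, hagree⟩ := hU u hu
          simp only [Finset.mem_filter]
          exact ⟨(hmem u).mpr huB, hagree c hci⟩
      have hvU : v ∉ U := fun hvU => (hU v hvU).2.1 rfl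
      have hins : (insert v U).card = ℓ + 1 := by
        rw [Finset.card_insert_of_notMem hvU, hUcard, Nat.add_sub_cancel]
      have h2 := Finset.card_le_card hUsub
      rw [hins] at h2
      exact Nat.not_succ_le_self ℓ (h2.trans hcard)
    rcases hcase with hcard | hcard
    · exact key 0 1 (by decide) hcard
    · exact key 1 0 (by decide) hcard
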